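/- arXiv:2309.00421 — 4 statements merged into one kernel-verified Lean document; each statement's English description precedes it below -/
import Mathlib

section
/- Let M = [[a,b],[c,d]] and M' = [[a,b],[r,d']] both have determinant ±1, where 0 ≤ r ≤ |c| and a ≠ 0. Then |d'| ≤ |d| + 2. -/
theorem second_column_bound (a b c d d' r : ℤ)
    (hdet : a * d - b * c = 1 ∨ a * d - b * c = -1)
    (hdet' : a * d' - b * r = 1 ∨ a * d' - b * r = -1)
    (hr0 : 0 ≤ r) (hrc : r ≤ |c|) (ha : a ≠ 0) :
    |d'| ≤ |d| + 2 := by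
  have ha1 : 1 ≤ |a| := by
    have := abs_pos.mpr ha; omega
  have hbr : |b * r| ≤ |b * c| := by
    rw [abs_mul, abs_mul, abs_of_nonneg hr0]
    exact mul_le_mul_of_nonneg_left hrc (abs_nonneg b)
  have h1 : |a * d'| ≤ |b * r| + 1 := by
    rcases hdet' with h | h
    · have : a * d' = b * r + 1 := by linarith
      rw [this]
      calc |b * r + 1| ≤ |b * r| + |1| := abs_add_le _ _
        _ = |b * r| + 1 := by norm_num
    · have : a * d' = b * r - 1 := by linarith
      rw [this]
      calc |b * r - 1| ≤ |b * r| + |1| := abs_sub _ _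
        _ = |b * r| + 1 := by norm_num
  have h2 : |b * c| ≤ |a * d| + 1 := by
    rcases hdet with h | h
    · have : b * c = a * d - 1 := by linarith
      rw [this]
      calc |a * d - 1| ≤ |a * d| + |1| := abs_sub _ _
        _ = |a * d| + 1 := by norm_num
    · have : b * c = a * d + 1 := by linarith
      rw [this]
      calc |a * d + 1| ≤ |a * d| + |1| := abs_add_le _ _
        _ = |a * d| + 1 := by norm_num
  have h3 : |a| * |d'| ≤ |a| * |d| + 2 := by
    rw [← abs_mul, ← abs_mul]; linarith
  nlinarith [abs_nonneg d', abs_nonneg d]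
end

section
/- Every element of GL(2,ℤ) with matrix entries a,b,c,d can be written as a product of matrices from {A, B, C, A⁻¹, B⁻¹, C⁻¹} of length at most K·(|a|+|b|+|c|+|d|) + K for some absolute constant K, where A = [[1,-1],[0,-1]], B = [[1,0],[0,-1]], C = [[0,1],[1,0]]. -/
open Matrix

local notation "gA" => (!![1, -1; 0, -1] : Matrix (Fin 2) (Fin 2) ℤ)
local notation "gB" => (!![1, 0; 0, -1] : Matrix (Fin 2) (Fin 2) ℤ)
local notation "gC" => (!![0, 1; 1, 0] : Matrix (Fin 2) (Fin 2) ℤ)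


lemma sign_helper (a c : ℤ) (hc : c ≠ 0) (h : |c| ≤ |a|) :
    ∃ ε : ℤ, (ε = 1 ∨ ε = -1) ∧ |a + ε * c| = |a| - |c| ∧ ε * (a * c) < 0 := by
  rcases lt_trichotomy (a * c) 0 with h1 | h1 | h1
  · refine ⟨1, Or.inl rfl, ?_, by linarith⟩
    rcases abs_cases a with ⟨ha, ha'⟩ | ⟨ha, ha'⟩ <;>
      rcases abs_cases c with ⟨hcc, hc'⟩ | ⟨hcc, hc'⟩ <;>
      rcases abs_cases (a + 1 * c) with ⟨hs, hs'⟩ | ⟨hs, hs'⟩ <;> nlinarith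
  · rcases mul_eq_zero.mp h1 with rfl | rfl
    · simp at h; exact absurd h hc
    · exact absurd rfl hc
  · refine ⟨-1, Or.inr rfl, ?_, by nlinarith⟩
    rcases abs_cases a with ⟨ha, ha'⟩ | ⟨ha, ha'⟩ <;>
      rcases abs_cases c with ⟨hcc, hc'⟩ | ⟨hcc, hc'⟩ <;>
      rcases abs_cases (a + -1 * c) with ⟨hs, hs'⟩ | ⟨hs, hs'⟩ <;> nlinarith

lemma abs_add_of_mul_nonpos {x y : ℤ} (h : x * y ≤ 0) :
    |x + y| = |x| - |y| ∨ |x + y| = |y| - |x| := by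
  have key : ∀ u v : ℤ, 0 ≤ u → v ≤ 0 → |u + v| = |u| - |v| ∨ |u + v| = |v| - |u| := by
    intro u v hu hv
    rcases le_total 0 (u + v) with hs | hs
    · left; rw [abs_of_nonneg hs, abs_of_nonneg hu, abs_of_nonpos hv]; ring
    · right; rw [abs_of_nonpos hs, abs_of_nonneg hu, abs_of_nonpos hv]; ring
  rcases le_total 0 x with hx | hx
  · rcases le_total 0 y with hy | hy
    · have hxy0 : x * y = 0 := le_antisymm h (mul_nonneg hx hy)
      rcases mul_eq_zero.mp hxy0 with rfl | rfl
      · right; simp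
      · left; simp
    · exact key x y hx hy
  · rcases le_total 0 y with hy | hy
    · have := key y x hy hx
      rw [add_comm x y]; tauto
    · have hxy0 : x * y = 0 := le_antisymm h (by nlinarith)
      rcases mul_eq_zero.mp hxy0 with rfl | rfl
      · right; simp
      · left; simp

lemma abs_sub_of_mul_neg {x y : ℤ} (h : x * y < 0) : |x - y| = |x| + |y| := by
  rcases le_total 0 x with hx | hx
  · have hy : y ≤ 0 := by nlinarith
    rw [abs_of_nonneg (by linarith : (0:ℤ) ≤ x - y), abs_of_nonneg hx, abs_of_nonpos hy]; ring
  · have hy : 0 ≤ y := by nlinarith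
    rw [abs_of_nonpos (by linarith : x - y ≤ (0:ℤ)), abs_of_nonpos hx, abs_of_nonneg hy]; ring

lemma etaeq (a b c d a' b' c' d' : ℤ) (h1 : a = a') (h2 : b = b') (h3 : c = c')
    (h4 : d = d') : !![a, b; c, d] = !![a', b'; c', d'] := by
  subst h1 h2 h3 h4; rfl


lemma core (a b c d : ℤ) (hb : |b| ≤ |a|) (hc : |c| ≤ |a|) (hd : |d| ≤ |a|)
    (hdet : a * d - b * c = 1 ∨ a * d - b * c = -1)
    (hS : 3 ≤ |a| + |b| + |c| + |d|) :
    ∃ ε : ℤ, (ε = 1 ∨ ε = -1) ∧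
      (|a + ε * c| + |b + ε * d| < |a| + |b| ∨
       |c + ε * a| + |d + ε * b| < |c| + |d| ∨
       |a + ε * b| + |c + ε * d| < |a| + |c| ∨
       |b + ε * a| + |d + ε * c| < |b| + |d|) := by
  have habs1 : |a * d - b * c| = 1 := by
    rcases hdet with h | h <;> rw [h] <;> norm_num
  by_cases hc0 : c = 0
  · subst hc0
    simp only [mul_zero, sub_zero] at hdet
    have had : (a = 1 ∧ d = 1) ∨ (a = -1 ∧ d = -1) ∨ (a = 1 ∧ d = -1) ∨ (a = -1 ∧ d = 1) := by
      rcases hdet with h | h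
      · rcases Int.eq_one_or_neg_one_of_mul_eq_one' h with ⟨h1, h2⟩ | ⟨h1, h2⟩
        · exact Or.inl ⟨h1, h2⟩
        · exact Or.inr (Or.inl ⟨h1, h2⟩)
      · have h' : a * (-d) = 1 := by linarith
        rcases Int.eq_one_or_neg_one_of_mul_eq_one' h' with ⟨h1, h2⟩ | ⟨h1, h2⟩
        · exact Or.inr (Or.inr (Or.inl ⟨h1, by linarith⟩))
        · exact Or.inr (Or.inr (Or.inr ⟨h1, by linarith⟩))
    have hb0 : b ≠ 0 := by
      rintro rfl
      have h1 : |a| = 1 := by rcases had with ⟨h1,_⟩|⟨h1,_⟩|⟨h1,_⟩|⟨h1,_⟩ <;> rw [h1] <;> norm_num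
      have h2 : |d| = 1 := by rcases had with ⟨_,h2⟩|⟨_,h2⟩|⟨_,h2⟩|⟨_,h2⟩ <;> rw [h2] <;> norm_num
      simp [h1, h2] at hS
    -- use 4th disjunct: b + ε a = 0 with ε = -(a*b)/|ab| ; since a = ±1, take ε = -a*b…
    -- a = ±1 so ε := -(a * b / |b|)? Instead: choose ε := if 0 < a * b then -1 else 1
    have ha1 : a = 1 ∨ a = -1 := by rcases had with ⟨h1,_⟩|⟨h1,_⟩|⟨h1,_⟩|⟨h1,_⟩ <;> [left;right;left;right] <;> exact h1
    have hb1 : 1 ≤ |b| := Int.one_le_abs hb0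
    obtain ⟨ε, hε, habs, _⟩ := sign_helper b a (by rintro rfl; simp at ha1) (by rcases ha1 with rfl|rfl <;> simpa using hb1)
    refine ⟨ε, hε, Or.inr (Or.inr (Or.inr ?_))⟩
    have h1 : |a| = 1 := by rcases ha1 with rfl|rfl <;> norm_num
    rw [habs, h1]
    simp only [mul_zero, add_zero]
    omega
  · by_cases hb0 : b = 0
    · subst hb0
      simp only [zero_mul, sub_zero] at hdet
      have ha1 : a = 1 ∨ a = -1 := by
        rcases hdet with h | h
        · rcases Int.eq_one_or_neg_one_of_mul_eq_one' h with ⟨h1, _⟩ | ⟨h1, _⟩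
          · exact Or.inl h1
          · exact Or.inr h1
        · have h' : a * (-d) = 1 := by linarith
          rcases Int.eq_one_or_neg_one_of_mul_eq_one' h' with ⟨h1, _⟩ | ⟨h1, _⟩
          · exact Or.inl h1
          · exact Or.inr h1
      have hc1 : 1 ≤ |c| := Int.one_le_abs hc0
      obtain ⟨ε, hε, habs, _⟩ := sign_helper c a (by rintro rfl; simp at ha1) (by rcases ha1 with rfl|rfl <;> simpa using hc1)
      refine ⟨ε, hε, Or.inr (Or.inl ?_)⟩
      have h1 : |a| = 1 := by rcases ha1 with rfl|rfl <;> norm_num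
      rw [habs, h1]
      simp only [mul_zero, add_zero]
      omega
    · -- main case: b ≠ 0 and c ≠ 0
      have hb1 : 1 ≤ |b| := Int.one_le_abs hb0
      have hc1 : 1 ≤ |c| := Int.one_le_abs hc0
      have ha0 : a ≠ 0 := by rintro rfl; simp at hc; omega
      have hna := abs_nonneg a
      have hnb := abs_nonneg b
      have hnc := abs_nonneg c
      have hnd := abs_nonneg d
      obtain ⟨ε1, hε1, habsE1, hsign1⟩ := sign_helper a c hc0 hc
      by_cases H1 : |b + ε1 * d| < |b| + |c|
      · exact ⟨ε1, hε1, Or.inl (by omega)⟩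
      push_neg at H1
      obtain ⟨ε2, hε2, habsE2, hsign2⟩ := sign_helper a b hb0 hb
      by_cases H2 : |c + ε2 * d| < |c| + |b|
      · exact ⟨ε2, hε2, Or.inr (Or.inr (Or.inl (by omega)))⟩
      push_neg at H2
      exfalso
      have habsD : ∀ ε : ℤ, (ε = 1 ∨ ε = -1) → |ε * d| = |d| := by
        rintro ε (rfl | rfl) <;> simp
      have hkey : (a * d) * (b * c) < 0 → False := by
        intro hneg
        have h1 : |a * d - b * c| = |a * d| + |b * c| := abs_sub_of_mul_neg hneg
        rw [habs1, abs_mul, abs_mul] at h1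
        have h2 : 1 ≤ |b| * |c| := by nlinarith
        have h3 : 0 ≤ |a| * |d| := by positivity
        have h4 : |a| * |d| = 0 := by omega
        have h5 : a * d = 0 := by
          have := abs_mul a d
          have : |a * d| = 0 := by rw [abs_mul]; omega
          exact abs_eq_zero.mp this
        rcases mul_eq_zero.mp h5 with rfl | rfl
        · exact ha0 rfl
        · nlinarith
      -- from H1 get |d| ≥ 2|b| + |c| or sign contradiction
      have hD1 : 2 * |b| + |c| ≤ |d| := by
        rcases le_or_gt (b * (ε1 * d)) 0 with hbd | hbd
        · rcases abs_add_of_mul_nonpos hbd with h | h <;> rw [habsD ε1 hε1] at h <;> omega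
        · exfalso
          apply hkey
          have h' : (ε1 * (a * c)) * (b * (ε1 * d)) < 0 := mul_neg_of_neg_of_pos hsign1 hbd
          have hε1sq : ε1 * ε1 = 1 := by rcases hε1 with rfl | rfl <;> norm_num
          have heq : a * d * (b * c) = (ε1 * (a * c)) * (b * (ε1 * d)) := by
            linear_combination (-(a * c * (b * d))) * hε1sq
          rw [heq]; exact h'
      have hD2 : 2 * |c| + |b| ≤ |d| := by
        rcases le_or_gt (c * (ε2 * d)) 0 with hcd | hcd
        · rcases abs_add_of_mul_nonpos hcd with h | h <;> rw [habsD ε2 hε2] at h <;> omega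
        · exfalso
          apply hkey
          have h' : (ε2 * (a * b)) * (c * (ε2 * d)) < 0 := mul_neg_of_neg_of_pos hsign2 hcd
          have hε2sq : ε2 * ε2 = 1 := by rcases hε2 with rfl | rfl <;> norm_num
          have heq : a * d * (b * c) = (ε2 * (a * b)) * (c * (ε2 * d)) := by
            linear_combination (-(a * c * (b * d))) * hε2sq
          rw [heq]; exact h'
      -- final contradiction
      have h6 : |a| * |d| - |b| * |c| ≤ 1 := by
        have := abs_sub_abs_le_abs_sub (a * d) (b * c)
        rw [habs1, abs_mul, abs_mul] at this
        linarith
      nlinarith [mul_le_mul hd (le_refl |d|) (abs_nonneg d) (abs_nonneg a),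
        mul_le_mul hD1 hD2 (by positivity) (abs_nonneg d),
        mul_le_mul hb1 hc1 (by norm_num) (by omega)]

lemma key (a b c d : ℤ)
    (hdet : a * d - b * c = 1 ∨ a * d - b * c = -1)
    (hS : 3 ≤ |a| + |b| + |c| + |d|) :
    ∃ ε : ℤ, (ε = 1 ∨ ε = -1) ∧
      (|a + ε * c| + |b + ε * d| < |a| + |b| ∨
       |c + ε * a| + |d + ε * b| < |c| + |d| ∨
       |a + ε * b| + |c + ε * d| < |a| + |c| ∨
       |b + ε * a| + |d + ε * c| < |b| + |d|) := by
  rcases le_total |b| |a| with h1 | h1 <;> rcases le_total |d| |c| with h2 | h2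
  · rcases le_total |c| |a| with h3 | h3
    · -- a is max
      exact core a b c d h1 h3 (le_trans h2 h3) hdet hS
    · -- c is max
      obtain ⟨ε, hε, h⟩ := core c d a b h2 h3 (le_trans h1 h3)
        (by rcases hdet with h | h; exact Or.inr (by linarith); exact Or.inl (by linarith))
        (by linarith)
      refine ⟨ε, hε, ?_⟩
      rcases h with h | h | h | h
      · exact Or.inr (Or.inl (by linarith))
      · exact Or.inl (by linarith)
      · exact Or.inr (Or.inr (Or.inl (by linarith)))
      · exact Or.inr (Or.inr (Or.inr (by linarith)))
  · rcases le_total |d| |a| with h3 | h3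
    · exact core a b c d h1 (le_trans h2 h3) h3 hdet hS
    · -- d is max
      obtain ⟨ε, hε, h⟩ := core d c b a h2 (le_trans h1 h3) h3
        (by rcases hdet with h | h; exact Or.inl (by linarith); exact Or.inr (by linarith))
        (by linarith)
      refine ⟨ε, hε, ?_⟩
      rcases h with h | h | h | h
      · exact Or.inr (Or.inl (by linarith))
      · exact Or.inl (by linarith)
      · exact Or.inr (Or.inr (Or.inr (by linarith)))
      · exact Or.inr (Or.inr (Or.inl (by linarith)))
  · rcases le_total |b| |c| with h3 | h3
    · -- c is max
      obtain ⟨ε, hε, h⟩ := core c d a b h2 (le_trans h1 h3) h3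
        (by rcases hdet with h | h; exact Or.inr (by linarith); exact Or.inl (by linarith))
        (by linarith)
      refine ⟨ε, hε, ?_⟩
      rcases h with h | h | h | h
      · exact Or.inr (Or.inl (by linarith))
      · exact Or.inl (by linarith)
      · exact Or.inr (Or.inr (Or.inl (by linarith)))
      · exact Or.inr (Or.inr (Or.inr (by linarith)))
    · -- b is max
      obtain ⟨ε, hε, h⟩ := core b a d c h1 (le_trans h2 h3) h3
        (by rcases hdet with h | h; exact Or.inr (by linarith); exact Or.inl (by linarith))
        (by linarith)
      refine ⟨ε, hε, ?_⟩
      rcases h with h | h | h | h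
      · exact Or.inl (by linarith)
      · exact Or.inr (Or.inl (by linarith))
      · exact Or.inr (Or.inr (Or.inr (by linarith)))
      · exact Or.inr (Or.inr (Or.inl (by linarith)))
  · rcases le_total |b| |d| with h3 | h3
    · -- d is max
      obtain ⟨ε, hε, h⟩ := core d c b a h2 h3 (le_trans h1 h3)
        (by rcases hdet with h | h; exact Or.inl (by linarith); exact Or.inr (by linarith))
        (by linarith)
      refine ⟨ε, hε, ?_⟩
      rcases h with h | h | h | h
      · exact Or.inr (Or.inl (by linarith))
      · exact Or.inl (by linarith)
      · exact Or.inr (Or.inr (Or.inr (by linarith)))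
      · exact Or.inr (Or.inr (Or.inl (by linarith)))
    · -- b is max
      obtain ⟨ε, hε, h⟩ := core b a d c h1 h3 (le_trans h2 h3)
        (by rcases hdet with h | h; exact Or.inr (by linarith); exact Or.inl (by linarith))
        (by linarith)
      refine ⟨ε, hε, ?_⟩
      rcases h with h | h | h | h
      · exact Or.inl (by linarith)
      · exact Or.inr (Or.inl (by linarith))
      · exact Or.inr (Or.inr (Or.inr (by linarith)))
      · exact Or.inr (Or.inr (Or.inl (by linarith)))

lemma base_case (a b c d : ℤ) (hsum : |a| + |b| + |c| + |d| ≤ 2)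
    (hdet : a * d - b * c = 1 ∨ a * d - b * c = -1) :
    ∃ L : List (Matrix (Fin 2) (Fin 2) ℤ),
      (∀ Q ∈ L, Q = gA ∨ Q = gB ∨ Q = gC) ∧
      L.prod = !![a, b; c, d] ∧ L.length ≤ 5 := by
  have hna := abs_nonneg a; have hnb := abs_nonneg b
  have hnc := abs_nonneg c; have hnd := abs_nonneg d
  by_cases ha0 : a = 0
  · subst ha0
    have hbc : b * c = 1 ∨ b * c = -1 := by
      rcases hdet with h | h
      · exact Or.inr (by linarith)
      · exact Or.inl (by linarith)
    have hb0 : b ≠ 0 := by rintro rfl; simp at hbc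
    have hc0 : c ≠ 0 := by rintro rfl; simp at hbc
    have hd0 : d = 0 := by
      have := Int.one_le_abs hb0; have := Int.one_le_abs hc0
      have : |d| = 0 := by omega
      exact abs_eq_zero.mp this
    subst hd0
    have hcases : (b = 1 ∧ c = 1) ∨ (b = -1 ∧ c = -1) ∨ (b = 1 ∧ c = -1) ∨ (b = -1 ∧ c = 1) := by
      rcases hbc with h | h
      · rcases Int.eq_one_or_neg_one_of_mul_eq_one' h with ⟨h1, h2⟩ | ⟨h1, h2⟩
        · exact Or.inl ⟨h1, h2⟩
        · exact Or.inr (Or.inl ⟨h1, h2⟩)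
      · have h' : b * (-c) = 1 := by linarith
        rcases Int.eq_one_or_neg_one_of_mul_eq_one' h' with ⟨h1, h2⟩ | ⟨h1, h2⟩
        · exact Or.inr (Or.inr (Or.inl ⟨h1, by linarith⟩))
        · exact Or.inr (Or.inr (Or.inr ⟨h1, by linarith⟩))
    rcases hcases with ⟨rfl, rfl⟩ | ⟨rfl, rfl⟩ | ⟨rfl, rfl⟩ | ⟨rfl, rfl⟩
    · exact ⟨[gC], by simp, by simp, by norm_num⟩
    · refine ⟨[gB, gC, gB], by simp, ?_, by norm_num⟩
      simp [Matrix.mul_fin_two]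
    · refine ⟨[gB, gC], by simp, ?_, by norm_num⟩
      simp [Matrix.mul_fin_two]
    · refine ⟨[gC, gB], by simp, ?_, by norm_num⟩
      simp [Matrix.mul_fin_two]
  · -- a ≠ 0 : then b = 0 ∧ c = 0
    have ha1 := Int.one_le_abs ha0
    have hb0 : b = 0 ∧ c = 0 := by
      by_contra h
      have hbc1 : 1 ≤ |b| + |c| := by
        rcases Classical.em (b = 0) with rfl | hb
        · have : c ≠ 0 := fun hc => h ⟨rfl, hc⟩
          have := Int.one_le_abs this; omega
        · have := Int.one_le_abs hb; omega
      have hd0 : d = 0 := by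
        have : |d| = 0 := by omega
        exact abs_eq_zero.mp this
      subst hd0
      have hbc : b * c = 1 ∨ b * c = -1 := by
        rcases hdet with h' | h'
        · exact Or.inr (by linarith)
        · exact Or.inl (by linarith)
      have hb0' : b ≠ 0 := by rintro rfl; simp at hbc
      have hc0' : c ≠ 0 := by rintro rfl; simp at hbc
      have := Int.one_le_abs hb0'; have := Int.one_le_abs hc0'
      omega
    obtain ⟨rfl, rfl⟩ := hb0
    have had : a * d = 1 ∨ a * d = -1 := by
      rcases hdet with h | h
      · exact Or.inl (by linarith)
      · exact Or.inr (by linarith)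
    have hcases : (a = 1 ∧ d = 1) ∨ (a = -1 ∧ d = -1) ∨ (a = 1 ∧ d = -1) ∨ (a = -1 ∧ d = 1) := by
      rcases had with h | h
      · rcases Int.eq_one_or_neg_one_of_mul_eq_one' h with ⟨h1, h2⟩ | ⟨h1, h2⟩
        · exact Or.inl ⟨h1, h2⟩
        · exact Or.inr (Or.inl ⟨h1, h2⟩)
      · have h' : a * (-d) = 1 := by linarith
        rcases Int.eq_one_or_neg_one_of_mul_eq_one' h' with ⟨h1, h2⟩ | ⟨h1, h2⟩
        · exact Or.inr (Or.inr (Or.inl ⟨h1, by linarith⟩))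
        · exact Or.inr (Or.inr (Or.inr ⟨h1, by linarith⟩))
    rcases hcases with ⟨rfl, rfl⟩ | ⟨rfl, rfl⟩ | ⟨rfl, rfl⟩ | ⟨rfl, rfl⟩
    · exact ⟨[], by simp, by simp [Matrix.one_fin_two], by norm_num⟩
    · refine ⟨[gB, gC, gB, gC], by simp, ?_, by norm_num⟩
      simp [Matrix.mul_fin_two]
    · exact ⟨[gB], by simp, by simp, by norm_num⟩
    · refine ⟨[gC, gB, gC], by simp, ?_, by norm_num⟩
      simp [Matrix.mul_fin_two]

set_option maxHeartbeats 2000000 in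
lemma build : ∀ n : ℕ, ∀ a b c d : ℤ, |a| + |b| + |c| + |d| ≤ (n : ℤ) →
    (a * d - b * c = 1 ∨ a * d - b * c = -1) →
    ∃ L : List (Matrix (Fin 2) (Fin 2) ℤ),
      (∀ Q ∈ L, Q = gA ∨ Q = gB ∨ Q = gC) ∧
      L.prod = !![a, b; c, d] ∧ L.length ≤ 4 * n + 5 := by
  intro n
  induction n with
  | zero =>
    intro a b c d hsum hdet
    obtain ⟨L, h1, h2, h3⟩ := base_case a b c d (by push_cast at hsum; linarith) hdet
    exact ⟨L, h1, h2, by omega⟩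
  | succ n ih =>
    intro a b c d hsum hdet
    by_cases hS : |a| + |b| + |c| + |d| ≤ 2
    · obtain ⟨L, h1, h2, h3⟩ := base_case a b c d hS hdet
      exact ⟨L, h1, h2, by omega⟩
    · push_neg at hS
      obtain ⟨ε, hε, hop⟩ := key a b c d hdet (by linarith)
      rcases hε with rfl | rfl <;> rcases hop with h | h | h | h
      · -- ε = 1, disjunct 1
        obtain ⟨L, hL, hprod, hlen⟩ := ih (a + 1*c) (b + 1*d) (c) (d)
          (by push_cast at hsum ⊢; linarith)
          (by rcases hdet with h' | h'
              · exact Or.inl (by linear_combination h')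
              · exact Or.inr (by linear_combination h'))
        refine ⟨gB::gA::L, ?_, ?_, ?_⟩
        · intro Q hQ
          simp only [List.mem_cons, List.mem_append, List.mem_singleton] at hQ
          have := hL Q
          tauto
        · simp only [List.prod_cons, List.prod_append, List.prod_nil, hprod, mul_one]
          simp only [Matrix.mul_fin_two]
          apply etaeq <;> ring
        · simp only [List.length_cons, List.length_append, List.length_nil]
          omega
      · -- ε = 1, disjunct 2
        obtain ⟨L, hL, hprod, hlen⟩ := ih (a) (b) (c + 1*a) (d + 1*b)
          (by push_cast at hsum ⊢; linarith)
          (by rcases hdet with h' | h'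
              · exact Or.inl (by linear_combination h')
              · exact Or.inr (by linear_combination h'))
        refine ⟨gC::gB::gA::gC::L, ?_, ?_, ?_⟩
        · intro Q hQ
          simp only [List.mem_cons, List.mem_append, List.mem_singleton] at hQ
          have := hL Q
          tauto
        · simp only [List.prod_cons, List.prod_append, List.prod_nil, hprod, mul_one]
          simp only [Matrix.mul_fin_two]
          apply etaeq <;> ring
        · simp only [List.length_cons, List.length_append, List.length_nil]
          omega
      · -- ε = 1, disjunct 3
        obtain ⟨L, hL, hprod, hlen⟩ := ih (a + 1*b) (b) (c + 1*d) (d)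
          (by push_cast at hsum ⊢; linarith)
          (by rcases hdet with h' | h'
              · exact Or.inl (by linear_combination h')
              · exact Or.inr (by linear_combination h'))
        refine ⟨L ++ [gC, gB, gA, gC], ?_, ?_, ?_⟩
        · intro Q hQ
          simp only [List.mem_cons, List.mem_append, List.mem_singleton] at hQ
          have := hL Q
          tauto
        · simp only [List.prod_cons, List.prod_append, List.prod_nil, hprod, mul_one]
          simp only [Matrix.mul_fin_two]
          apply etaeq <;> ring
        · simp only [List.length_cons, List.length_append, List.length_nil]
          omega
      · -- ε = 1, disjunct 4
        obtain ⟨L, hL, hprod, hlen⟩ := ih (a) (b + 1*a) (c) (d + 1*c)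
          (by push_cast at hsum ⊢; linarith)
          (by rcases hdet with h' | h'
              · exact Or.inl (by linear_combination h')
              · exact Or.inr (by linear_combination h'))
        refine ⟨L ++ [gB, gA], ?_, ?_, ?_⟩
        · intro Q hQ
          simp only [List.mem_cons, List.mem_append, List.mem_singleton] at hQ
          have := hL Q
          tauto
        · simp only [List.prod_cons, List.prod_append, List.prod_nil, hprod, mul_one]
          simp only [Matrix.mul_fin_two]
          apply etaeq <;> ring
        · simp only [List.length_cons, List.length_append, List.length_nil]
          omega
      · -- ε = -1, disjunct 1
        obtain ⟨L, hL, hprod, hlen⟩ := ih (a + -1*c) (b + -1*d) (c) (d)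
          (by push_cast at hsum ⊢; linarith)
          (by rcases hdet with h' | h'
              · exact Or.inl (by linear_combination h')
              · exact Or.inr (by linear_combination h'))
        refine ⟨gA::gB::L, ?_, ?_, ?_⟩
        · intro Q hQ
          simp only [List.mem_cons, List.mem_append, List.mem_singleton] at hQ
          have := hL Q
          tauto
        · simp only [List.prod_cons, List.prod_append, List.prod_nil, hprod, mul_one]
          simp only [Matrix.mul_fin_two]
          apply etaeq <;> ring
        · simp only [List.length_cons, List.length_append, List.length_nil]
          omega
      · -- ε = -1, disjunct 2
        obtain ⟨L, hL, hprod, hlen⟩ := ih (a) (b) (c + -1*a) (d + -1*b)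
          (by push_cast at hsum ⊢; linarith)
          (by rcases hdet with h' | h'
              · exact Or.inl (by linear_combination h')
              · exact Or.inr (by linear_combination h'))
        refine ⟨gC::gA::gB::gC::L, ?_, ?_, ?_⟩
        · intro Q hQ
          simp only [List.mem_cons, List.mem_append, List.mem_singleton] at hQ
          have := hL Q
          tauto
        · simp only [List.prod_cons, List.prod_append, List.prod_nil, hprod, mul_one]
          simp only [Matrix.mul_fin_two]
          apply etaeq <;> ring
        · simp only [List.length_cons, List.length_append, List.length_nil]
          omega
      · -- ε = -1, disjunct 3
        obtain ⟨L, hL, hprod, hlen⟩ := ih (a + -1*b) (b) (c + -1*d) (d)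
          (by push_cast at hsum ⊢; linarith)
          (by rcases hdet with h' | h'
              · exact Or.inl (by linear_combination h')
              · exact Or.inr (by linear_combination h'))
        refine ⟨L ++ [gC, gA, gB, gC], ?_, ?_, ?_⟩
        · intro Q hQ
          simp only [List.mem_cons, List.mem_append, List.mem_singleton] at hQ
          have := hL Q
          tauto
        · simp only [List.prod_cons, List.prod_append, List.prod_nil, hprod, mul_one]
          simp only [Matrix.mul_fin_two]
          apply etaeq <;> ring
        · simp only [List.length_cons, List.length_append, List.length_nil]
          omega
      · -- ε = -1, disjunct 4
        obtain ⟨L, hL, hprod, hlen⟩ := ih (a) (b + -1*a) (c) (d + -1*c)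
          (by push_cast at hsum ⊢; linarith)
          (by rcases hdet with h' | h'
              · exact Or.inl (by linear_combination h')
              · exact Or.inr (by linear_combination h'))
        refine ⟨L ++ [gA, gB], ?_, ?_, ?_⟩
        · intro Q hQ
          simp only [List.mem_cons, List.mem_append, List.mem_singleton] at hQ
          have := hL Q
          tauto
        · simp only [List.prod_cons, List.prod_append, List.prod_nil, hprod, mul_one]
          simp only [Matrix.mul_fin_two]
          apply etaeq <;> ring
        · simp only [List.length_cons, List.length_append, List.length_nil]
          omega


theorem gl2z_word_length
    (A B C : Matrix (Fin 2) (Fin 2) ℤ)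
    (hA : A = !![1, -1; 0, -1]) (hB : B = !![1, 0; 0, -1])
    (hC : C = !![0, 1; 1, 0]) :
    ∃ K : ℕ, ∀ a b c d : ℤ, ∀ M : Matrix (Fin 2) (Fin 2) ℤ,
      M = !![a, b; c, d] → (M.det = 1 ∨ M.det = -1) →
      ∃ L : List (Matrix (Fin 2) (Fin 2) ℤ),
        (∀ Q ∈ L, Q = A ∨ Q = B ∨ Q = C ∨ Q = A⁻¹ ∨ Q = B⁻¹ ∨ Q = C⁻¹) ∧
        L.prod = M ∧
        (L.length : ℤ) ≤ K * (|a| + |b| + |c| + |d|) + K := by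
  subst hA; subst hB; subst hC
  refine ⟨5, ?_⟩
  intro a b c d M hM hdet
  subst hM
  rw [Matrix.det_fin_two_of] at hdet
  have hnn : (0:ℤ) ≤ |a| + |b| + |c| + |d| := by positivity
  obtain ⟨L, hL, hprod, hlen⟩ := build (|a| + |b| + |c| + |d|).toNat a b c d
    (by rw [Int.toNat_of_nonneg hnn]) hdet
  refine ⟨L, fun Q hQ => ?_, hprod, ?_⟩
  · rcases hL Q hQ with h | h | h
    exacts [Or.inl h, Or.inr (Or.inl h), Or.inr (Or.inr (Or.inl h))]
  · have h2 : (L.length : ℤ) ≤ 4 * ((|a| + |b| + |c| + |d|).toNat : ℤ) + 5 := by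
      exact_mod_cast hlen
    rw [Int.toNat_of_nonneg hnn] at h2
    push_cast
    linarith
end

section
/- Let G act on a tree T without inversions. If every element of G acting on T fixes no vertex (the action is free), then G is a free group. -/
noncomputable section
open CategoryTheory MulAction SimpleGraph

universe u v

namespace FAOT

variable {V : Type v} {X : Type*} [Group X] {T : SimpleGraph V}

/-- Product of labels along a walk. -/
def lwalk (ℓ : V → V → X) : ∀ {a b : V}, T.Walk a b → X
  | _, _, Walk.nil => 1
  | _, _, Walk.cons (u := a) (v := c) _ p => ℓ a c * lwalk ℓ p

@[simp] lemma lwalk_nil (ℓ : V → V → X) {a : V} : lwalk ℓ (Walk.nil : T.Walk a a) = 1 := rfl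

@[simp] lemma lwalk_cons (ℓ : V → V → X) {a c b : V} (h : T.Adj a c) (p : T.Walk c b) :
    lwalk ℓ (Walk.cons h p) = ℓ a c * lwalk ℓ p := rfl

lemma lwalk_append (ℓ : V → V → X) {a b c : V} (p : T.Walk a b) (q : T.Walk b c) :
    lwalk ℓ (p.append q) = lwalk ℓ p * lwalk ℓ q := by
  induction p with
  | nil => simp
  | cons h p ih => simp [ih, mul_assoc]

variable (hT : T.IsTree)

/-- The unique path between two vertices of a tree. -/
def pB (a b : V) : T.Walk a b := (hT.existsUnique_path a b).exists.choose

lemma pB_isPath (a b : V) : (pB hT a b).IsPath := (hT.existsUnique_path a b).exists.choose_spec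

lemma pB_unique {a b : V} (p : T.Walk a b) (hp : p.IsPath) : p = pB hT a b :=
  (hT.existsUnique_path a b).unique hp (pB_isPath hT a b)

/-- Label product along the canonical path. -/
def lhat (ℓ : V → V → X) (a b : V) : X := lwalk ℓ (pB hT a b)

variable {ℓ : V → V → X}
variable (hsym : ∀ u v : V, T.Adj u v → ℓ v u = (ℓ u v)⁻¹)

include hsym in
lemma lhat_adj {a c : V} (h : T.Adj a c) (b : V) :
    lhat hT ℓ a b = ℓ a c * lhat hT ℓ c b := by
  classical
  by_cases hu : a ∈ (pB hT c b).support
  · have hq := pB_isPath hT c b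
    have hs : ((pB hT c b).takeUntil a hu).IsPath := hq.takeUntil hu
    have hr : ((pB hT c b).dropUntil a hu).IsPath := hq.dropUntil hu
    have he : (Walk.cons h.symm Walk.nil : T.Walk c a).IsPath := by
      simp [Walk.cons_isPath_iff, h.ne']
    have hse : (pB hT c b).takeUntil a hu = Walk.cons h.symm Walk.nil := by
      have := hT.IsAcyclic.path_unique ⟨_, hs⟩ ⟨_, he⟩
      exact congrArg Subtype.val this
    have hdrop : (pB hT c b).dropUntil a hu = pB hT a b := pB_unique hT _ hr
    have hspec := (pB hT c b).take_spec hu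
    have : lhat hT ℓ c b = ℓ c a * lhat hT ℓ a b := by
      rw [lhat, ← hspec, lwalk_append, hse, hdrop]
      simp [lhat]
    rw [this, hsym a c h, ← mul_assoc, mul_inv_cancel, one_mul]
  · have : (Walk.cons h (pB hT c b)).IsPath := (pB_isPath hT c b).cons hu
    rw [lhat, ← pB_unique hT _ this, lwalk_cons, lhat]

include hsym in
lemma lwalk_eq_lhat {a b : V} (p : T.Walk a b) : lwalk ℓ p = lhat hT ℓ a b := by
  induction p with
  | nil => rw [lhat, ← pB_unique hT Walk.nil Walk.IsPath.nil, lwalk_nil]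
  | cons h p ih => rw [lwalk_cons, ih, ← lhat_adj hT hsym h]

include hsym in
lemma lhat_refl (a : V) : lhat hT ℓ a a = 1 :=
  (lwalk_eq_lhat hT hsym (Walk.nil : T.Walk a a)).symm

include hsym in
lemma lhat_trans (a b c : V) :
    lhat hT ℓ a c = lhat hT ℓ a b * lhat hT ℓ b c := by
  have := lwalk_eq_lhat hT hsym ((pB hT a b).append (pB hT b c))
  rw [lwalk_append] at this
  exact this.symm

include hsym in
lemma lhat_single {a b : V} (h : T.Adj a b) : lhat hT ℓ a b = ℓ a b := by
  have := lwalk_eq_lhat hT hsym (Walk.cons h Walk.nil)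
  simpa using this.symm


lemma lwalk_map (φ : T →g T) {ℓ : V → V → X} (hφ : ∀ u v : V, ℓ (φ u) (φ v) = ℓ u v)
    {a b : V} (p : T.Walk a b) : lwalk ℓ (p.map φ) = lwalk ℓ p := by
  induction p with
  | nil => rfl
  | cons h p ih => rw [Walk.map_cons, lwalk_cons, lwalk_cons, ih, hφ]

section Orbits

variable {G : Type u} [Group G] [MulAction G V]

/-- Orbit space of vertices. -/
abbrev VO (G : Type u) [Group G] (V : Type v) [MulAction G V] : Type v :=
  Quotient (orbitRel G V)

/-- Orbit space of ordered pairs of vertices. -/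
abbrev EO (G : Type u) [Group G] (V : Type v) [MulAction G V] : Type v :=
  Quotient (orbitRel G (V × V))

variable (G) in
/-- class of a vertex -/
def qm (u : V) : VO G V := Quotient.mk (orbitRel G V) u

variable (G) in
/-- class of a pair -/
def em (u v : V) : EO G V := Quotient.mk (orbitRel G (V × V)) (u, v)

/-- representative -/
def rep (a : VO G V) : V := Quotient.out a

@[simp] lemma qm_rep (a : VO G V) : qm G (rep a) = a := Quotient.out_eq a

@[simp] lemma qm_smul (g : G) (u : V) : qm G (g • u) = qm G u :=
  Quotient.sound ((orbitRel_apply).mpr (mem_orbit_iff.mpr ⟨g, rfl⟩))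

lemma em_smul (g : G) (u v : V) : em G (g • u) (g • v) = em G u v :=
  Quotient.sound ((orbitRel_apply).mpr (mem_orbit_iff.mpr ⟨g, rfl⟩))

lemma exists_gamma (u : V) : ∃ g : G, g • rep (qm G u) = u := by
  have h1 : qm G (rep (qm G u)) = qm G u := qm_rep _
  have h2 : rep (qm G u) ∈ orbit G u := Quotient.exact h1
  obtain ⟨g, hg⟩ := mem_orbit_iff.mp h2
  exact ⟨g⁻¹, by rw [← hg, inv_smul_smul]⟩

variable (G) in
/-- canonical transporter from the representative to `u` -/
def gamma (u : V) : G := (exists_gamma u).choose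

lemma gamma_spec (u : V) : gamma G u • rep (qm G u) = u := (exists_gamma u).choose_spec

variable (hfree : ∀ g : G, g ≠ 1 → ∀ v : V, g • v ≠ v)

include hfree in
lemma faith {g h : G} {u : V} (e : g • u = h • u) : g = h := by
  by_contra hne
  refine hfree (h⁻¹ * g) (fun hh => hne ?_) u ?_
  · rw [← inv_mul_eq_one.mp hh]
  · rw [mul_smul, e, inv_smul_smul]

include hfree in
lemma gamma_smul (g : G) (u : V) : gamma G (g • u) = g * gamma G u := by
  have h1 := gamma_spec (G := G) (g • u)
  rw [qm_smul] at h1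
  have h2 : (g * gamma G u) • rep (qm G u) = g • u := by
    rw [mul_smul, gamma_spec]
  exact faith hfree (h1.trans h2.symm)

include hfree in
lemma gamma_rep (a : VO G V) : gamma G (rep a) = 1 := by
  have h1 := gamma_spec (G := G) (rep a)
  rw [qm_rep] at h1
  have h2 : (1 : G) • rep a = rep a := one_smul _ _
  exact faith hfree (h1.trans h2.symm)

lemma rep_qm (u : V) : rep (qm G u) = (gamma G u)⁻¹ • u := by
  rw [eq_inv_smul_iff, gamma_spec]


section Edges

variable (T : SimpleGraph V)
variable (hadj : ∀ (g : G) (u v : V), T.Adj u v → T.Adj (g • u) (g • v))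

include hadj in
lemma adj_smul_iff (g : G) (u v : V) : T.Adj (g • u) (g • v) ↔ T.Adj u v :=
  ⟨fun h => by simpa using hadj g⁻¹ _ _ h, hadj g u v⟩

variable (G) in
/-- swap involution on pair orbits -/
def esw : EO G V → EO G V :=
  Quotient.lift (fun p => em G p.2 p.1) (by
    rintro p q hpq
    obtain ⟨g, hg⟩ := mem_orbit_iff.mp ((orbitRel_apply).mp hpq)
    have h1 : g • q.2 = p.2 := by rw [← hg]; rfl
    have h2 : g • q.1 = p.1 := by rw [← hg]; rfl
    simp only [← h1, ← h2, em_smul])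

@[simp] lemma esw_em (u v : V) : esw G (em G u v) = em G v u := rfl

@[simp] lemma esw_esw (e : EO G V) : esw G (esw G e) = e :=
  Quotient.inductionOn e (fun ⟨u, v⟩ => rfl)

/-- adjacency predicate on pair orbits -/
def isE : EO G V → Prop :=
  Quotient.lift (fun p => T.Adj p.1 p.2) (by
    rintro p q hpq
    obtain ⟨g, hg⟩ := mem_orbit_iff.mp ((orbitRel_apply).mp hpq)
    have h1 : g • q.1 = p.1 := by rw [← hg]; rfl
    have h2 : g • q.2 = p.2 := by rw [← hg]; rfl
    show T.Adj p.1 p.2 = T.Adj q.1 q.2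
    rw [← h1, ← h2]
    exact propext (adj_smul_iff T hadj g q.1 q.2))

@[simp] lemma isE_em (u v : V) : isE T hadj (em G u v) = T.Adj u v := rfl

lemma isE_esw {e : EO G V} (he : isE T hadj e) : isE T hadj (esw G e) := by
  induction e using Quotient.inductionOn with
  | _ p =>
    obtain ⟨u, v⟩ := p
    exact (he : T.Adj u v).symm

/-- first endpoint class -/
def ends1 : EO G V → VO G V :=
  Quotient.lift (fun p => qm G p.1) (by
    rintro p q hpq
    obtain ⟨g, hg⟩ := mem_orbit_iff.mp ((orbitRel_apply).mp hpq)
    have h1 : g • q.1 = p.1 := by rw [← hg]; rfl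
    show qm G p.1 = qm G q.1
    rw [← h1, qm_smul])

/-- second endpoint class -/
def ends2 : EO G V → VO G V :=
  Quotient.lift (fun p => qm G p.2) (by
    rintro p q hpq
    obtain ⟨g, hg⟩ := mem_orbit_iff.mp ((orbitRel_apply).mp hpq)
    have h1 : g • q.2 = p.2 := by rw [← hg]; rfl
    show qm G p.2 = qm G q.2
    rw [← h1, qm_smul])

@[simp] lemma ends1_em (u v : V) : ends1 (G := G) (em G u v) = qm G u := rfl
@[simp] lemma ends2_em (u v : V) : ends2 (G := G) (em G u v) = qm G v := rfl

variable (hfree : ∀ g : G, g ≠ 1 → ∀ v : V, g • v ≠ v)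

include hfree in
lemma gv_aux (p q : V × V) (hpq : (orbitRel G (V × V)) p q) :
    (gamma G p.1)⁻¹ * gamma G p.2 = (gamma G q.1)⁻¹ * gamma G q.2 := by
  obtain ⟨g, hg⟩ := mem_orbit_iff.mp ((orbitRel_apply).mp hpq)
  have h1 : g • q.1 = p.1 := by rw [← hg]; rfl
  have h2 : g • q.2 = p.2 := by rw [← hg]; rfl
  rw [← h1, ← h2, gamma_smul hfree, gamma_smul hfree, mul_inv_rev]
  group

/-- group transporter of a pair orbit -/
def gv : EO G V → G :=
  Quotient.lift (fun p => (gamma G p.1)⁻¹ * gamma G p.2) (gv_aux hfree)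

@[simp] lemma gv_em (u v : V) : gv hfree (em G u v) = (gamma G u)⁻¹ * gamma G v := rfl

variable (hnoinv : ∀ (g : G) (u v : V), T.Adj u v → ¬(g • u = v ∧ g • v = u))

include hnoinv in
lemma esw_ne {e : EO G V} (he : isE T hadj e) : esw G e ≠ e := by
  induction e using Quotient.inductionOn with
  | _ p =>
    obtain ⟨u, v⟩ := p
    intro hcontra
    have h2 : (v, u) ∈ orbit G (u, v) := (orbitRel_apply).mp (Quotient.exact hcontra)
    obtain ⟨g, hg⟩ := mem_orbit_iff.mp h2
    have h3 : g • u = v := congrArg Prod.fst hg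
    have h4 : g • v = u := congrArg Prod.snd hg
    exact hnoinv g u v he ⟨h3, h4⟩

variable (V G) in
/-- pairing of a pair orbit with its swap -/
def pairSetoid : Setoid (EO G V) where
  r e e' := e' = e ∨ e' = esw G e
  iseqv := by
    constructor
    · exact fun e => Or.inl rfl
    · rintro e e' (rfl | rfl)
      · exact Or.inl rfl
      · right; rw [esw_esw]
    · rintro e e' e'' (rfl | rfl) (rfl | rfl)
      · exact Or.inl rfl
      · exact Or.inr rfl
      · exact Or.inr rfl
      · left; rw [esw_esw]

variable (V G) in
/-- set of positively-oriented pair orbits -/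
def pos : Set (EO G V) := {e | (Quotient.mk (pairSetoid V G) e).out = e}

include hnoinv in
lemma pos_iff {e : EO G V} (he : isE T hadj e) : esw G e ∈ pos V G ↔ e ∉ pos V G := by
  have hne : esw G e ≠ e := esw_ne T hadj hnoinv he
  have hmk : Quotient.mk (pairSetoid V G) (esw G e) = Quotient.mk (pairSetoid V G) e :=
    Quotient.sound (Or.inr (esw_esw e).symm)
  have hout : (Quotient.mk (pairSetoid V G) e).out = e ∨
      (Quotient.mk (pairSetoid V G) e).out = esw G e := by
    have h : e = (Quotient.mk (pairSetoid V G) e).out ∨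
        e = esw G (Quotient.mk (pairSetoid V G) e).out :=
      Quotient.exact (Quotient.out_eq (Quotient.mk (pairSetoid V G) e))
    rcases h with h | h
    · exact Or.inl h.symm
    · right
      conv_rhs => rw [h, esw_esw]
  constructor
  · intro h1 h2
    have e1 : (Quotient.mk (pairSetoid V G) e).out = esw G e := by
      rw [← hmk]; exact h1
    have e2 : (Quotient.mk (pairSetoid V G) e).out = e := h2
    exact hne (e1.symm.trans e2)
  · intro h1
    show (Quotient.mk (pairSetoid V G) (esw G e)).out = esw G e
    rw [hmk]
    rcases hout with h | h
    · exact absurd h h1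
    · exact h


@[simp] lemma ends1_esw (e : EO G V) : ends1 (G := G) (esw G e) = ends2 (G := G) e :=
  Quotient.inductionOn e (fun ⟨_, _⟩ => rfl)

@[simp] lemma ends2_esw (e : EO G V) : ends2 (G := G) (esw G e) = ends1 (G := G) e :=
  Quotient.inductionOn e (fun ⟨_, _⟩ => rfl)

end Edges

end Orbits

section Groupoid

variable (G : Type u) [Group G] (V : Type v) [MulAction G V]

/-- Objects of the quotient groupoid: orbits of vertices. -/
def FObj : Type (max u v) := ULift.{u} (VO G V)

instance : Groupoid (FObj G V) where
  Hom _ _ := ULift.{v} G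
  id _ := ⟨1⟩
  comp f g := ⟨g.down * f.down⟩
  id_comp f := congrArg ULift.up (mul_one _)
  comp_id f := congrArg ULift.up (one_mul _)
  assoc f g h := congrArg ULift.up (mul_assoc _ _ _).symm
  inv f := ⟨f.down⁻¹⟩
  inv_comp f := congrArg ULift.up (mul_inv_cancel _)
  comp_inv f := congrArg ULift.up (inv_mul_cancel _)

variable {G V} in
/-- object constructor -/
def ob (x : VO G V) : FObj G V := ⟨x⟩

variable {G V} in
/-- morphism constructor -/
def mor {a b : FObj G V} (g : G) : a ⟶ b := ⟨g⟩

variable {G V} in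
@[simp] lemma mor_down {a b : FObj G V} (g : G) : (mor (a := a) (b := b) g).down = g := rfl

variable {G V} in
lemma mor_comp {a b c : FObj G V} (g h : G) :
    (mor g : a ⟶ b) ≫ (mor h : b ⟶ c) = (mor (h * g) : a ⟶ c) := rfl

variable {G V} in
lemma mor_eta {a b : FObj G V} (m : a ⟶ b) : m = mor m.down := rfl

variable (T : SimpleGraph V)
variable (hadj : ∀ (g : G) (u v : V), T.Adj u v → T.Adj (g • u) (g • v))

/-- Generating arrows: positively oriented orbits of edges with prescribed endpoints. -/
def Arrow (a b : FObj G V) : Type (max u v) :=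
  ULift.{u} {e : EO G V // isE T hadj e ∧ e ∈ pos V G ∧
    ends1 (G := G) e = a.down ∧ ends2 (G := G) e = b.down}

variable (hfree : ∀ g : G, g ≠ 1 → ∀ v : V, g • v ≠ v)

/-- The canonical morphism associated with a generating arrow. -/
def ofArrow {a b : FObj G V} (e : Arrow G V T hadj a b) :
    (a : FObj G V) ⟶ b :=
  mor (gv hfree (esw G e.down.val))

variable {X : Type w} [Group X]

open scoped Classical in
variable {T hadj} in
/-- Labels on pair-orbits induced by a labelling of the generating arrows. -/
def labE (f : ∀ a b : FObj G V, Arrow G V T hadj a b → X) (e : EO G V) : X :=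
  if h : isE T hadj e ∧ esw G e ∈ pos V G then
    f ⟨ends2 (G := G) e⟩ ⟨ends1 (G := G) e⟩
      ⟨⟨esw G e, isE_esw T hadj h.1, h.2, ends1_esw e, ends2_esw e⟩⟩
  else if h2 : isE T hadj e ∧ e ∈ pos V G then
    (f ⟨ends1 (G := G) e⟩ ⟨ends2 (G := G) e⟩ ⟨⟨e, h2.1, h2.2, rfl, rfl⟩⟩)⁻¹
  else 1

variable {T hadj} in
/-- Labels on ordered pairs of vertices. -/
def labv (f : ∀ a b : FObj G V, Arrow G V T hadj a b → X) (u v : V) : X :=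
  labE G V f (em G u v)

variable {G V T hadj}
variable {f : ∀ a b : FObj G V, Arrow G V T hadj a b → X}
variable (hnoinv : ∀ (g : G) (u v : V), T.Adj u v → ¬(g • u = v ∧ g • v = u))

include hnoinv in
lemma labv_sym {u v : V} (h : T.Adj u v) :
    labv G V f v u = (labv G V f u v)⁻¹ := by
  by_cases hpos : em G v u ∈ pos V G
  · have hpos' : em G u v ∉ pos V G := by
      have := (pos_iff T hadj hnoinv (e := em G u v) h).mp
      simpa using this hpos
    have h1 : labv G V f u v = f ⟨qm G v⟩ ⟨qm G u⟩
        ⟨⟨em G v u, h.symm, hpos, rfl, rfl⟩⟩ := by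
      rw [labv, labE, dif_pos ⟨h, by simpa using hpos⟩]; rfl
    have h2 : labv G V f v u = (f ⟨qm G v⟩ ⟨qm G u⟩
        ⟨⟨em G v u, h.symm, hpos, rfl, rfl⟩⟩)⁻¹ := by
      rw [labv, labE, dif_neg (by
        rintro ⟨-, hc⟩
        exact hpos' (by simpa using hc)), dif_pos ⟨h.symm, hpos⟩]
      rfl
    rw [h1, h2]
  · have hpos' : em G u v ∈ pos V G := by
      by_contra hc
      exact hpos (by simpa using (pos_iff T hadj hnoinv (e := em G u v) h).mpr hc)
    have h1 : labv G V f u v = (f ⟨qm G u⟩ ⟨qm G v⟩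
        ⟨⟨em G u v, h, hpos', rfl, rfl⟩⟩)⁻¹ := by
      rw [labv, labE, dif_neg (by
        rintro ⟨-, hc⟩
        exact hpos (by simpa using hc)), dif_pos ⟨h, hpos'⟩]
      rfl
    have h2 : labv G V f v u = f ⟨qm G u⟩ ⟨qm G v⟩
        ⟨⟨em G u v, h, hpos', rfl, rfl⟩⟩ := by
      rw [labv, labE, dif_pos ⟨h.symm, by simpa using hpos'⟩]; rfl
    rw [h1, h2, inv_inv]

lemma labv_smul (g : G) (u v : V) : labv G V f (g • u) (g • v) = labv G V f u v := by
  rw [labv, labv, em_smul]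


variable (hT : T.IsTree)
variable (hfree : ∀ g : G, g ≠ 1 → ∀ v : V, g • v ≠ v)

include hnoinv in
lemma lhat_labv_smul (g : G) (x y : V) :
    lhat hT (labv G V f) (g • x) (g • y) = lhat hT (labv G V f) x y := by
  have hsym : ∀ u v : V, T.Adj u v → labv G V f v u = (labv G V f u v)⁻¹ :=
    fun _ _ h => labv_sym hnoinv h
  let φ : T →g T := ⟨fun w => g • w, fun h => hadj g _ _ h⟩
  have h1 : lwalk (labv G V f) ((pB hT x y).map φ) = lwalk (labv G V f) (pB hT x y) :=
    lwalk_map φ (fun u v => labv_smul g u v) _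
  have h2 := lwalk_eq_lhat hT hsym ((pB hT x y).map φ)
  exact h2.symm.trans (h1.trans (lwalk_eq_lhat hT hsym (pB hT x y)))

variable (f) in
/-- The functor to `SingleObj X` determined by the labelling `f`. -/
def Ftor : FObj G V ⥤ SingleObj X where
  obj _ := SingleObj.star X
  map {a b} m := (lhat hT (labv G V f) (rep b.down) (m.down • rep a.down) : X)
  map_id a := by
    show lhat hT (labv G V f) (rep a.down) ((1 : G) • rep a.down) = _
    rw [one_smul, SingleObj.id_as_one]
    exact lhat_refl hT (fun _ _ h => labv_sym hnoinv h) _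
  map_comp {a b c} m n := by
    show lhat hT (labv G V f) (rep c.down) ((n.down * m.down) • rep a.down) = _
    rw [SingleObj.comp_as_mul, mul_smul]
    rw [lhat_trans hT (fun _ _ h => labv_sym hnoinv h) (rep c.down) (n.down • rep b.down)
      (n.down • m.down • rep a.down)]
    rw [lhat_labv_smul hnoinv hT]

lemma Ftor_map {a b : FObj G V} (m : a ⟶ b) :
    (Ftor f hnoinv hT).map m
      = lhat hT (labv G V f) (rep b.down) (m.down • rep a.down) := rfl

include hnoinv in
lemma Ftor_of {a b : FObj G V} (e : Arrow G V T hadj a b) :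
    (Ftor f hnoinv hT).map (ofArrow G V T hadj hfree e) = f a b e := by
  obtain ⟨a⟩ := a
  obtain ⟨b⟩ := b
  obtain ⟨⟨ε, hE, hpos, h1, h2⟩⟩ := e
  dsimp at h1 h2
  subst h1
  subst h2
  revert hE hpos
  induction ε using Quotient.inductionOn with
  | _ p =>
    obtain ⟨u, v⟩ := p
    intro hE hpos
    have hE' : T.Adj u v := hE
    have key : ((gamma G v)⁻¹ * gamma G u) • rep (qm G u) = (gamma G v)⁻¹ • u := by
      rw [rep_qm, smul_smul, mul_assoc, mul_inv_cancel, mul_one]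
    show lhat hT (labv G V f) (rep (qm G v)) (((gamma G v)⁻¹ * gamma G u) • rep (qm G u)) = _
    rw [key, rep_qm (G := G) v, lhat_labv_smul hnoinv hT,
      lhat_single hT (fun _ _ h => labv_sym hnoinv h) hE'.symm]
    rw [labv, labE, dif_pos ⟨hE'.symm, by exact hpos⟩]
    rfl

section Uniqueness

variable (E : FObj G V ⥤ SingleObj X)
variable (hE : ∀ (a b : FObj G V) (e : Arrow G V T hadj a b),
    E.map (ofArrow G V T hadj hfree e) = f a b e)

include hE hnoinv in
lemma uniq_edge {s c : V} (h : T.Adj s c) (a b : FObj G V)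
    (ha : a.down = qm G c) (hb : b.down = qm G s) :
    E.map (X := a) (Y := b) (mor ((gamma G s)⁻¹ * gamma G c)) = labv G V f s c := by
  obtain ⟨a⟩ := a
  obtain ⟨b⟩ := b
  dsimp at ha hb
  subst ha
  subst hb
  by_cases hpos : em G c s ∈ pos V G
  · have h0 := hE ⟨qm G c⟩ ⟨qm G s⟩ ⟨⟨em G c s, h.symm, hpos, rfl, rfl⟩⟩
    have h1 : labv G V f s c
        = f ⟨qm G c⟩ ⟨qm G s⟩ ⟨⟨em G c s, h.symm, hpos, rfl, rfl⟩⟩ := by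
      rw [labv, labE, dif_pos ⟨h, by simpa using hpos⟩]; rfl
    rw [h1, ← h0]
    rfl
  · have hpos' : em G s c ∈ pos V G := by
      by_contra hc
      exact hpos (by simpa using (pos_iff T hadj hnoinv (e := em G s c) h).mpr hc)
    have h0 := hE ⟨qm G s⟩ ⟨qm G c⟩ ⟨⟨em G s c, h, hpos', rfl, rfl⟩⟩
    have h1 : labv G V f s c
        = (f ⟨qm G s⟩ ⟨qm G c⟩ ⟨⟨em G s c, h, hpos', rfl, rfl⟩⟩)⁻¹ := by
      rw [labv, labE, dif_neg (by
        rintro ⟨-, hc⟩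
        exact hpos (by simpa using hc)), dif_pos ⟨h, hpos'⟩]
      rfl
    have hmor : (mor ((gamma G s)⁻¹ * gamma G c) : ob (qm G c) ⟶ ob (qm G s))
        = Groupoid.inv (ofArrow G V T hadj hfree
            (⟨⟨em G s c, h, hpos', rfl, rfl⟩⟩ : Arrow G V T hadj ⟨qm G s⟩ ⟨qm G c⟩)) := by
      apply congrArg ULift.up
      show (gamma G s)⁻¹ * gamma G c = ((gamma G c)⁻¹ * gamma G s)⁻¹
      rw [mul_inv_rev, inv_inv]
    change E.map (X := ob (qm G c)) (Y := ob (qm G s)) (mor ((gamma G s)⁻¹ * gamma G c)) = _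
    rw [hmor, h1, ← h0]
    exact (congrArg E.map (Groupoid.inv_eq_inv _)).trans ((Functor.map_inv E _).trans (SingleObj.inv_as_inv X _))

include hE hnoinv in
lemma uniq_walk {s t : V} (w : T.Walk s t) : ∀ (a b : FObj G V),
    a.down = qm G t → b.down = qm G s →
    E.map (X := a) (Y := b) (mor ((gamma G s)⁻¹ * gamma G t)) = lwalk (labv G V f) w := by
  induction w with
  | @nil s =>
    intro a b ha hb
    obtain ⟨a⟩ := a
    obtain ⟨b⟩ := b
    dsimp at ha hb
    subst ha
    subst hb
    have : (mor ((gamma G s)⁻¹ * gamma G s) : ob (qm G s) ⟶ ob (qm G s))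
        = 𝟙 (ob (qm G s)) := congrArg ULift.up (inv_mul_cancel _)
    have h5 := E.map_id (ob (qm G s))
    change E.map (X := ob (qm G s)) (Y := ob (qm G s)) (mor ((gamma G s)⁻¹ * gamma G s)) = _
    rw [this, h5, lwalk_nil, SingleObj.id_as_one]
  | @cons s c t h w ih =>
    intro a b ha hb
    have hcomp : (mor ((gamma G c)⁻¹ * gamma G t) : a ⟶ ob (qm G c))
        ≫ (mor ((gamma G s)⁻¹ * gamma G c) : ob (qm G c) ⟶ b)
        = mor ((gamma G s)⁻¹ * gamma G t) := by
      apply congrArg ULift.up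
      show (gamma G s)⁻¹ * gamma G c * ((gamma G c)⁻¹ * gamma G t) = (gamma G s)⁻¹ * gamma G t
      group
    rw [← hcomp, E.map_comp, SingleObj.comp_as_mul,
      ih a (ob (qm G c)) ha rfl,
      uniq_edge (hnoinv := hnoinv) (hfree := hfree) (E := E) (hE := hE) h (ob (qm G c)) b rfl hb,
      lwalk_cons]

include hE hnoinv in
lemma uniq_map {a b : FObj G V} (m : a ⟶ b) :
    E.map m = lhat hT (labv G V f) (rep b.down) (m.down • rep a.down) := by
  have h1 : qm G (m.down • rep a.down) = a.down := by rw [qm_smul, qm_rep]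
  have h2 : qm G (rep b.down) = b.down := qm_rep _
  have h3 : gamma G (m.down • rep a.down) = m.down := by
    rw [gamma_smul hfree, gamma_rep hfree, mul_one]
  have h4 : gamma G (rep b.down) = 1 := gamma_rep hfree _
  have := uniq_walk (hnoinv := hnoinv) (hfree := hfree) (E := E) (hE := hE)
    (pB hT (rep b.down) (m.down • rep a.down)) a b h1.symm h2.symm
  rw [h3, h4, inv_one, one_mul] at this
  rw [← mor_eta] at this
  rw [this]
  exact lwalk_eq_lhat hT (fun _ _ h => labv_sym hnoinv h) _

end Uniqueness


/-- The endomorphism group at any object is `G`. -/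
def endEquiv (r : FObj G V) : End r ≃* G where
  toFun m := ULift.down (α := G) m
  invFun g := (mor g : r ⟶ r)
  left_inv _ := rfl
  right_inv _ := rfl
  map_mul' _ _ := rfl

end Groupoid

end FAOT

open FAOT in
theorem free_action_on_tree_implies_free
    (G : Type*) [Group G] (V : Type*) (T : SimpleGraph V) (hT : T.IsTree)
    [MulAction G V]
    (hadj : ∀ (g : G) (u v : V), T.Adj u v → T.Adj (g • u) (g • v))
    (hnoinv : ∀ (g : G) (u v : V), T.Adj u v → ¬(g • u = v ∧ g • v = u))
    (hfree : ∀ g : G, g ≠ 1 → ∀ v : V, g • v ≠ v) :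
    IsFreeGroup G := by
  letI fg : IsFreeGroupoid (FObj G V) :=
    { quiverGenerators := ⟨fun a b => Arrow G V T hadj a b⟩
      of := fun {a b} e => ofArrow G V T hadj hfree e
      unique_lift := by
        intro X _ f
        refine ⟨Ftor f hnoinv hT, fun a b e =>
          Ftor_of (hnoinv := hnoinv) (hT := hT) (hfree := hfree) e, ?_⟩
        intro E hE2
        refine CategoryTheory.Functor.ext (fun a => rfl) (fun a b m => ?_)
        rw [uniq_map (hnoinv := hnoinv) (hT := hT) (hfree := hfree) (E := E)
          (hE := fun a b e => hE2 a b e) m, ← Ftor_map (f := f) (hnoinv := hnoinv) (hT := hT) m]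
        simp [eqToHom_refl] }
  haveI : Nonempty (FObj G V) := by
    obtain ⟨v₀⟩ := hT.isConnected.nonempty
    exact ⟨ob (qm G v₀)⟩
  haveI : CategoryTheory.IsConnected (FObj G V) :=
    CategoryTheory.zigzag_isConnected
      (fun a b => Relation.ReflTransGen.single (Or.inl ⟨mor 1⟩))
  letI r : FObj G V := Classical.arbitrary _
  letI : IsFreeGroup (CategoryTheory.End r) := IsFreeGroupoid.endIsFreeOfConnectedFree r
  exact IsFreeGroup.ofMulEquiv (endEquiv r)
end
end

section
/- For integers a, c with a > 0, the Euclidean algorithm applied to the pair (a, c) via repeated division c = q·a + r with 0 ≤ r < a terminates, and the total sum of all quotients q occurring during the algorithm is at most a + c. -/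
/-- Sum of the quotients occurring in the Euclidean algorithm applied to `(a, c)`,
where at each step `c = q * a + r` with `0 ≤ r < a` and `(a, c)` is replaced by `(r, a)`. -/
def quotSum : ℕ → ℕ → ℕ
  | 0, _ => 0
  | (a + 1), c => c / (a + 1) + quotSum (c % (a + 1)) (a + 1)
  decreasing_by exact Nat.mod_lt _ (Nat.succ_pos a)

theorem euclid_quotient_sum (a c : ℕ) (ha : 0 < a) : quotSum a c ≤ a + c := by
  induction a using Nat.strong_induction_on generalizing c with
  | _ a ih =>
    match a, ha with
    | (b + 1), _ =>
      rw [quotSum]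
      have hkey : c / (b + 1) + c % (b + 1) ≤ c := by
        conv_rhs => rw [← Nat.div_add_mod c (b + 1)]
        have : c / (b + 1) ≤ (b + 1) * (c / (b + 1)) := Nat.le_mul_of_pos_left _ (Nat.succ_pos b)
        omega
      rcases Nat.eq_zero_or_pos (c % (b + 1)) with h | h
      · rw [h, quotSum]
        omega
      · have := ih (c % (b + 1)) (Nat.mod_lt _ (Nat.succ_pos b)) (b + 1) h
        omega
end
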